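/- Let t ≥ 3 be an integer and let G be a connected graph on n vertices. If G contains a saturating structure (with parameter t) of length n whose core is isomorphic to K_t, then wsat(G, K_{1,t}) = C(t,2). -/

import Mathlib

open MeasureTheory Filter

namespace WsatRandom

/-- `G'` contains a subgraph isomorphic to `H` that contains the edge `e`. -/
def ContainsCopyWithEdge {V W : Type*} (G' : SimpleGraph V) (H : SimpleGraph W)
    (e : Sym2 V) : Prop :=
  ∃ f : W → V, Function.Injective f ∧ (∀ a b, H.Adj a b → G'.Adj (f a) (f b)) ∧
    ∃ a b, H.Adj a b ∧ e = s(f a, f b)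

/-- `F` is a weakly `(G,H)`-saturated spanning subgraph of `G`: there is an ordering
`e_1, …, e_m` of the edges of `G` not in `F` such that adding them one by one, each newly
added edge lies in a copy of `H`. -/
def WeaklySaturated {V W : Type*} (G F : SimpleGraph V) (H : SimpleGraph W) : Prop :=
  F ≤ G ∧ ∃ es : List (Sym2 V), es.Nodup ∧
    (∀ e, e ∈ es ↔ e ∈ G.edgeSet \ F.edgeSet) ∧
    ∀ i : Fin es.length,
      ContainsCopyWithEdge
        (F ⊔ SimpleGraph.fromEdgeSet {e | e ∈ es.take ((i : ℕ) + 1)}) H (es.get i)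

/-- The weak saturation number: the minimum number of edges of a weakly `(G,H)`-saturated
spanning subgraph of `G`. -/
noncomputable def wsat {V W : Type*} (G : SimpleGraph V) (H : SimpleGraph W) : ℕ :=
  sInf {m | ∃ F, WeaklySaturated G F H ∧ F.edgeSet.ncard = m}

/-- Minimum degree of a graph. -/
noncomputable def minDeg {W : Type*} (H : SimpleGraph W) : ℕ :=
  sInf {d | ∃ v, d = {u | H.Adj v u}.ncard}

/-- The Bernoulli(p) measure on `Bool`. -/
noncomputable def bernoulliMeasure (p : ℝ) : Measure Bool :=
  ENNReal.ofReal p • Measure.dirac true + ENNReal.ofReal (1 - p) • Measure.dirac false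

/-- The product Bernoulli(p) measure on edge-indicator functions; its pushforward under
`graphOf` is the Erdős–Rényi random graph `G(n,p)`. -/
noncomputable def edgeMeasure (n : ℕ) (p : ℝ) : Measure (Sym2 (Fin n) → Bool) :=
  Measure.pi fun _ => bernoulliMeasure p

/-- The graph on `[n]` determined by an edge-indicator function. -/
def graphOf {n : ℕ} (ω : Sym2 (Fin n) → Bool) : SimpleGraph (Fin n) :=
  SimpleGraph.fromEdgeSet {e | ω e = true}

/-- The star `K_{1,t}`. -/
def star (t : ℕ) : SimpleGraph (Fin 1 ⊕ Fin t) :=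
  completeBipartiteGraph (Fin 1) (Fin t)

/-- `F` together with the vertex ordering `v : Fin x → V` is a saturating structure
(with parameter `t`) of length `x` and core size `y` in `G`: `t ≤ y < x`, `F` is a subgraph
of `G` with all edges among the listed vertices, and every vertex `v i` with `y ≤ i` has
exactly `t-1` neighbors in `F` among the previous vertices. -/
def IsSaturatingStructure {V : Type*} (G : SimpleGraph V) (t x y : ℕ)
    (F : SimpleGraph V) (v : Fin x → V) : Prop :=
  t ≤ y ∧ y < x ∧ F ≤ G ∧ Function.Injective v ∧
    (∀ a b : V, F.Adj a b → a ∈ Set.range v ∧ b ∈ Set.range v) ∧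
    ∀ i : Fin x, y ≤ (i : ℕ) →
      {j : Fin x | (j : ℕ) < (i : ℕ) ∧ F.Adj (v i) (v j)}.ncard = t - 1

variable {n t : ℕ}

lemma le_ncard_of_inj {α : Type*} [Finite α] {s : Set α} {k : ℕ} (g : Fin k → α)
    (hinj : Function.Injective g) (hmem : ∀ r, g r ∈ s) : k ≤ s.ncard := by
  classical
  cases nonempty_fintype α
  have h2 : (Set.range g).ncard = k := by
    rw [Set.ncard_eq_toFinset_card', Set.toFinset_range]
    rw [Finset.card_image_of_injective _ hinj, Finset.card_univ, Fintype.card_fin]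
  calc k = (Set.range g).ncard := h2.symm
    _ ≤ s.ncard := Set.ncard_le_ncard (Set.range_subset_iff.mpr hmem) s.toFinite

lemma exists_inj_to_set {α : Type*} [Finite α] {s : Set α} {k : ℕ} (h : k ≤ s.ncard) :
    ∃ g : Fin k → α, Function.Injective g ∧ ∀ r, g r ∈ s := by
  classical
  obtain ⟨u, hus, hcard⟩ := Set.exists_subset_card_eq (α := α) (s := s) h
  have hk : Nat.card u = k := by rwa [Nat.card_coe_set_eq]
  let e := Finite.equivFinOfCardEq hk
  exact ⟨fun r => (e.symm r : α),
    fun a b hab => e.symm.injective (Subtype.coe_injective hab),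
    fun r => hus (e.symm r).2⟩

lemma star_adj {a b : Fin 1 ⊕ Fin t} :
    (star t).Adj a b ↔ (a.isLeft ∧ b.isRight ∨ a.isRight ∧ b.isLeft) := Iff.rfl

/-- Construct a copy of `K_{1,t}` containing edge `s(c,d)` centered at `c`. -/
lemma copy_of_inj {G' : SimpleGraph (Fin n)} {c d : Fin n} (ht : 0 < t)
    (g : Fin (t - 1) → Fin n) (hginj : Function.Injective g)
    (hgadj : ∀ r, G'.Adj c (g r)) (hgne : ∀ r, g r ≠ d) (hcd : G'.Adj c d) :
    ContainsCopyWithEdge G' (star t) s(c, d) := by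
  classical
  set f : Fin 1 ⊕ Fin t → Fin n := fun z => Sum.elim (fun _ => c)
      (fun r : Fin t => if h : (r : ℕ) < t - 1 then g ⟨r, h⟩ else d) z with hf
  have hfr : ∀ r : Fin t, G'.Adj c (f (Sum.inr r)) := by
    intro r
    simp only [hf, Sum.elim_inr]
    split
    · exact hgadj _
    · exact hcd
  refine ⟨f, ?_, ?_, ?_⟩
  · rintro (x | x) (y | y) hxy
    · simp [Subsingleton.elim x y]
    · exact absurd hxy (hfr y).ne
    · exact absurd hxy.symm (hfr x).ne
    · simp only [hf, Sum.elim_inr] at hxy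
      congr 1
      apply Fin.ext
      split at hxy <;> split at hxy
      · have := congrArg Fin.val (hginj hxy); simpa using this
      · exact absurd hxy (hgne _)
      · exact absurd hxy.symm (hgne _)
      · omega
  · rintro (x | x) (y | y) hxy <;>
      simp only [star_adj, Sum.isLeft_inl, Sum.isRight_inr, Sum.isRight_inl,
        Sum.isLeft_inr, Bool.true_and, Bool.and_true, Bool.false_and, Bool.and_false,
        or_self, or_false, false_or] at hxy
    · exact absurd hxy (by simp)
    · exact hfr y
    · exact (hfr x).symm
    · exact absurd hxy (by simp)
  · refine ⟨Sum.inl 0, Sum.inr ⟨t - 1, by omega⟩, ?_, ?_⟩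
    · rw [star_adj]; simp
    · simp only [hf, Sum.elim_inl, Sum.elim_inr]
      rw [dif_neg (by omega)]

/-- Extract from a copy of `K_{1,t}` containing `e` a center with degree ≥ t. -/
lemma deg_of_copy {G' : SimpleGraph (Fin n)} {e : Sym2 (Fin n)}
    (h : ContainsCopyWithEdge G' (star t) e) :
    ∃ c d, e = s(c, d) ∧ G'.Adj c d ∧ t ≤ (G'.neighborSet c).ncard := by
  obtain ⟨f, hinj, hmap, a, b, hab, he⟩ := h
  have key : ∀ (x : Fin 1) , t ≤ (G'.neighborSet (f (Sum.inl x))).ncard := by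
    intro x
    refine le_ncard_of_inj (fun r => f (Sum.inr r)) (fun r r' hr => ?_) (fun r => ?_)
    · exact Sum.inr_injective (hinj hr)
    · exact hmap _ _ (by rw [star_adj]; simp)
  rw [star_adj] at hab
  rcases hab with ⟨ha, hb⟩ | ⟨ha, hb⟩
  · obtain ⟨x, rfl⟩ := Sum.isLeft_iff.mp ha
    obtain ⟨y, rfl⟩ := Sum.isRight_iff.mp hb
    exact ⟨f (Sum.inl x), f (Sum.inr y), he, hmap _ _ (by rw [star_adj]; simp), key x⟩
  · obtain ⟨y, rfl⟩ := Sum.isRight_iff.mp ha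
    obtain ⟨x, rfl⟩ := Sum.isLeft_iff.mp hb
    refine ⟨f (Sum.inl x), f (Sum.inr y), ?_, hmap _ _ (by rw [star_adj]; simp), key x⟩
    rw [he, Sym2.eq_swap]


/-- The graph after adding the first `i` listed edges. -/
def Hgr {V : Type*} (F0 : SimpleGraph V) (es : List (Sym2 V)) (i : ℕ) : SimpleGraph V :=
  F0 ⊔ SimpleGraph.fromEdgeSet {e | e ∈ es.take i}

lemma gauss_sum : ∀ m : ℕ, (∑ j ∈ Finset.range m, (m - j)) * 2 = m * (m + 1) := by
  intro m
  induction m with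
  | zero => simp
  | succ m ih =>
    have hstep : ∑ j ∈ Finset.range (m + 1), (m + 1 - j)
        = (∑ j ∈ Finset.range m, (m - j)) + m + 1 := by
      rw [Finset.sum_range_succ]
      have : ∑ j ∈ Finset.range m, (m + 1 - j) = ∑ j ∈ Finset.range m, ((m - j) + 1) := by
        refine Finset.sum_congr rfl fun j hj => ?_
        have := Finset.mem_range.mp hj; omega
      rw [this, Finset.sum_add_distrib, Finset.sum_const, Finset.card_range, smul_eq_mul]
      omega
    rw [hstep, Nat.add_mul, Nat.add_mul, ih]; ring

lemma sum_eq_choose (ht : 1 ≤ t) : (∑ j ∈ Finset.range (t - 1), (t - 1 - j)) = Nat.choose t 2 := by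
  have h := gauss_sum (t - 1)
  rw [Nat.sub_add_cancel (by omega : 1 ≤ t), Nat.mul_comm (t-1) t] at h
  rw [Nat.choose_two_right]
  omega

lemma lower_bound (ht : 3 ≤ t) (hn : t ≤ n) (G F0 : SimpleGraph (Fin n))
    (hdeg : ∀ a : Fin n, t - 1 ≤ (G.neighborSet a).ncard)
    (hws : WeaklySaturated G F0 (star t)) :
    Nat.choose t 2 ≤ F0.edgeSet.ncard := by
  classical
  obtain ⟨hle, es, hnd, hmem, hcopy⟩ := hws
  set m := es.length with hm
  -- basic facts about Hgr
  have hF0le : ∀ i, F0 ≤ Hgr F0 es i := fun i => le_sup_left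
  have hmono : ∀ {i j : ℕ}, i ≤ j → Hgr F0 es i ≤ Hgr F0 es j := by
    intro i j hij
    refine sup_le le_sup_left ?_
    refine le_trans ?_ (le_sup_right)
    intro a b hab
    rw [SimpleGraph.fromEdgeSet_adj] at hab ⊢
    refine ⟨?_, hab.2⟩
    have : es.take i = (es.take j).take i := by
      rw [List.take_take, min_eq_left hij]
    have h2 := hab.1
    simp only [Set.mem_setOf_eq] at h2 ⊢
    rw [this] at h2
    exact List.take_subset _ _ h2
  have hHle : ∀ i, Hgr F0 es i ≤ G := by
    intro i
    refine sup_le hle ?_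
    intro a b hab
    rw [SimpleGraph.fromEdgeSet_adj] at hab
    have := (hmem _).mp (List.take_subset _ _ hab.1)
    exact G.mem_edgeSet.mp this.1
  have hGle : G ≤ Hgr F0 es m := by
    intro a b hab
    by_cases hF : F0.Adj a b
    · exact hF0le m hF
    · rw [Hgr, SimpleGraph.sup_adj]
      right
      rw [SimpleGraph.fromEdgeSet_adj]
      refine ⟨?_, hab.ne⟩
      simp only [Set.mem_setOf_eq, hm, List.take_length]
      exact (hmem _).mpr ⟨G.mem_edgeSet.mpr hab, fun hc => hF (F0.mem_edgeSet.mp hc)⟩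
  -- activation time
  set dg : ℕ → Fin n → ℕ := fun i a => ((Hgr F0 es i).neighborSet a).ncard with hdg
  have hdgG : ∀ a, t - 1 ≤ dg m a := by
    intro a
    refine le_trans (hdeg a) (Set.ncard_le_ncard ?_ (Set.toFinite _))
    exact fun x hx => hGle hx
  set actT : Fin n → ℕ := fun a => sInf {i | t - 1 ≤ dg i a} with hactT
  have hact_mem : ∀ a, t - 1 ≤ dg (actT a) a := by
    intro a
    have hne : {i | t - 1 ≤ dg i a}.Nonempty := ⟨m, hdgG a⟩
    exact Nat.sInf_mem hne
  have hact_min : ∀ a i, i < actT a → dg i a < t - 1 := by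
    intro a i hi
    have h2 : i ∉ {i | t - 1 ≤ dg i a} := Nat.notMem_of_lt_sInf hi
    exact not_le.mp h2
  -- key step (K)
  have keyK : ∀ p : Fin es.length, ∃ c d, es.get p = s(c, d) ∧ actT c ≤ (p : ℕ) := by
    intro p
    obtain ⟨c, d, he, hadj, hdc⟩ := deg_of_copy (hcopy p)
    refine ⟨c, d, he, ?_⟩
    have hsub : (Hgr F0 es ((p : ℕ) + 1)).neighborSet c
        ⊆ insert d ((Hgr F0 es (p : ℕ)).neighborSet c) := by
      intro x hx
      have hx' : (Hgr F0 es ((p : ℕ) + 1)).Adj c x := hx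
      rw [Hgr, SimpleGraph.sup_adj] at hx'
      rcases hx' with h1 | h2
      · exact Set.mem_insert_iff.mpr (Or.inr (hF0le _ h1))
      · rw [SimpleGraph.fromEdgeSet_adj] at h2
        obtain ⟨hmem', hne⟩ := h2
        simp only [Set.mem_setOf_eq] at hmem'
        rw [← List.take_concat_get' es (p : ℕ) p.isLt] at hmem'
        rcases List.mem_append.mp hmem' with h3 | h3
        · refine Set.mem_insert_iff.mpr (Or.inr ?_)
          show (Hgr F0 es (p : ℕ)).Adj c x
          rw [Hgr, SimpleGraph.sup_adj]
          right
          rw [SimpleGraph.fromEdgeSet_adj]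
          exact ⟨h3, hne⟩
        · have h4 : s(c, x) = s(c, d) := by
            have := List.mem_singleton.mp h3
            rw [this]
            rw [← he]; rfl
          have : x = d := (Sym2.congr_right).mp h4
          exact Set.mem_insert_iff.mpr (Or.inl this)
    have h2 : t ≤ dg ((p : ℕ) + 1) c := hdc
    have h3 : dg ((p : ℕ) + 1) c ≤ dg (p : ℕ) c + 1 :=
      le_trans (Set.ncard_le_ncard hsub (Set.toFinite _)) (Set.ncard_insert_le _ _)
    have h4 : t - 1 ≤ dg (p : ℕ) c := by omega
    exact Nat.sInf_le h4
  -- key step (L)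
  have keyL : ∀ a x : Fin n, (Hgr F0 es (actT a)).Adj a x → ¬ F0.Adj a x →
      actT x < actT a := by
    intro a x hx hF
    rw [Hgr, SimpleGraph.sup_adj] at hx
    rcases hx with h1 | h2
    · exact absurd h1 hF
    · rw [SimpleGraph.fromEdgeSet_adj] at h2
      obtain ⟨hmem', _⟩ := h2
      simp only [Set.mem_setOf_eq] at hmem'
      obtain ⟨q, hq, hqe⟩ := List.getElem_of_mem hmem'
      have hql : q < min (actT a) es.length := by
        rw [← List.length_take]; exact hq
      have hqlen : q < es.length := lt_of_lt_of_le hql (min_le_right _ _)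
      have hqT : q < actT a := lt_of_lt_of_le hql (min_le_left _ _)
      have hqe' : es.get ⟨q, hqlen⟩ = s(a, x) := by
        have h1 : (es.take (actT a))[q]? = es[q]? := List.getElem?_take_of_lt hqT
        rw [List.getElem?_eq_getElem hq, List.getElem?_eq_getElem hqlen] at h1
        have h2 := Option.some.inj h1
        rw [List.get_eq_getElem, ← h2, hqe]
      obtain ⟨c, d, hcd, hcact⟩ := keyK ⟨q, hqlen⟩
      rw [hqe'] at hcd
      rcases Sym2.eq_iff.mp hcd with ⟨rfl, rfl⟩ | ⟨rfl, rfl⟩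
      · exact absurd (lt_of_le_of_lt hcact hqT) (lt_irrefl _)
      · exact lt_of_le_of_lt hcact hqT
  -- sort vertices by activation time
  set σ := Tuple.sort actT with hσ
  have hσmono : Monotone (actT ∘ σ) := Tuple.monotone_sort actT
  set A : ℕ → Set (Sym2 (Fin n)) := fun j =>
    {e | e ∈ F0.edgeSet ∧ ∃ x y : Fin n, e = s(x, y) ∧ (σ.symm x : ℕ) = j
      ∧ j < (σ.symm y : ℕ)} with hA
  have hAsub : ∀ j, A j ⊆ F0.edgeSet := fun j e he => he.1
  have hAdisj : ∀ j j', j ≠ j' → Disjoint (A j) (A j') := by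
    intro j j' hjj
    rw [Set.disjoint_left]
    rintro e ⟨_, x, y, rfl, hx, hy⟩ ⟨_, x', y', he', hx', hy'⟩
    rcases Sym2.eq_iff.mp he' with ⟨rfl, rfl⟩ | ⟨rfl, rfl⟩
    · omega
    · omega
  have hcardlt : ∀ j, j ≤ n → {k : Fin n | (k : ℕ) < j}.ncard = j := by
    intro j hj
    have hset : {k : Fin n | (k : ℕ) < j} = Set.range (Fin.castLE hj) := by
      ext k
      simp only [Set.mem_setOf_eq, Set.mem_range]
      constructor
      · intro hk; exact ⟨⟨(k : ℕ), hk⟩, by ext; simp⟩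
      · rintro ⟨r, rfl⟩; simpa using r.isLt
    rw [hset, Set.ncard_eq_toFinset_card', Set.toFinset_range,
      Finset.card_image_of_injective _ (Fin.castLE_injective hj), Finset.card_univ,
      Fintype.card_fin]
  have claim2 : ∀ j (hj : j < n), t - 1 ≤ (A j).ncard + j := by
    intro j hj
    set a := σ ⟨j, hj⟩ with ha
    have hsymm : σ.symm a = ⟨j, hj⟩ := Equiv.symm_apply_apply σ ⟨j, hj⟩
    set N := (Hgr F0 es (actT a)).neighborSet a with hN
    have hsplit : N ⊆ (N ∩ {x | (σ.symm x : ℕ) < j}) ∪ (N ∩ {x | j < (σ.symm x : ℕ)}) := by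
      intro x hx
      have hadj : (Hgr F0 es (actT a)).Adj a x := hx
      have hxa : x ≠ a := hadj.ne'
      have hne : (σ.symm x : ℕ) ≠ j := by
        intro hc
        apply hxa
        have : σ.symm x = σ.symm a := by rw [hsymm]; exact Fin.ext hc
        exact σ.symm.injective this
      rcases lt_or_gt_of_ne hne with h | h
      · exact Or.inl ⟨hx, h⟩
      · exact Or.inr ⟨hx, h⟩
    have h1 : (N ∩ {x | (σ.symm x : ℕ) < j}).ncard ≤ j := by
      have him : (σ.symm '' (N ∩ {x | (σ.symm x : ℕ) < j})) ⊆ {k : Fin n | (k : ℕ) < j} := by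
        rintro k ⟨x, ⟨_, hxlt⟩, rfl⟩
        exact hxlt
      calc (N ∩ {x | (σ.symm x : ℕ) < j}).ncard
          = (σ.symm '' (N ∩ {x | (σ.symm x : ℕ) < j})).ncard :=
            (Set.ncard_image_of_injective _ σ.symm.injective).symm
        _ ≤ {k : Fin n | (k : ℕ) < j}.ncard := Set.ncard_le_ncard him (Set.toFinite _)
        _ = j := hcardlt j hj.le
    have h2 : (N ∩ {x | j < (σ.symm x : ℕ)}).ncard ≤ (A j).ncard := by
      have hinj : Function.Injective (fun x : Fin n => s(a, x)) :=
        fun x y hxy => Sym2.congr_right.mp hxy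
      have himg : (fun x : Fin n => s(a, x)) '' (N ∩ {x | j < (σ.symm x : ℕ)}) ⊆ A j := by
        rintro e ⟨x, ⟨hxN, hxgt⟩, rfl⟩
        have hadj : (Hgr F0 es (actT a)).Adj a x := hxN
        have hFadj : F0.Adj a x := by
          by_contra hF
          have hlt := keyL a x hadj hF
          have hle : (⟨j, hj⟩ : Fin n) ≤ σ.symm x := Fin.le_def.mpr hxgt.le
          have := hσmono hle
          simp only [Function.comp_apply, Equiv.apply_symm_apply] at this
          rw [← ha] at this
          omega
        refine ⟨F0.mem_edgeSet.mpr hFadj, a, x, rfl, ?_, hxgt⟩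
        rw [hsymm]
      calc (N ∩ {x | j < (σ.symm x : ℕ)}).ncard
          = ((fun x : Fin n => s(a, x)) '' (N ∩ {x | j < (σ.symm x : ℕ)})).ncard :=
            (Set.ncard_image_of_injective _ hinj).symm
        _ ≤ (A j).ncard := Set.ncard_le_ncard himg (Set.toFinite _)
    have hNcard : t - 1 ≤ N.ncard := hact_mem a
    have hsplitcard : N.ncard ≤ (N ∩ {x | (σ.symm x : ℕ) < j}).ncard
        + (N ∩ {x | j < (σ.symm x : ℕ)}).ncard :=
      le_trans (Set.ncard_le_ncard hsplit (Set.toFinite _)) (Set.ncard_union_le _ _)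
    omega
  -- induction on the number of low-index vertices
  have main : ∀ r, r ≤ t - 1 →
      (∑ j ∈ Finset.range r, (t - 1 - j)) ≤ (⋃ j ∈ Finset.range r, A j).ncard := by
    intro r
    induction r with
    | zero => simp
    | succ r ih =>
      intro hr
      have hrn : r < n := by omega
      have hUnion : (⋃ j ∈ Finset.range (r + 1), A j)
          = (⋃ j ∈ Finset.range r, A j) ∪ A r := by
        rw [Finset.range_add_one]
        rw [Finset.set_biUnion_insert]
        rw [Set.union_comm]
      have hdisj : Disjoint (⋃ j ∈ Finset.range r, A j) (A r) := by
        rw [Set.disjoint_left]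
        rintro e he her
        simp only [Set.mem_iUnion, Finset.mem_range] at he
        obtain ⟨j, hjr, hej⟩ := he
        exact Set.disjoint_left.mp (hAdisj j r (by omega)) hej her
      have hAr : t - 1 - r ≤ (A r).ncard := by
        have := claim2 r hrn
        omega
      rw [hUnion, Finset.sum_range_succ,
        Set.ncard_union_eq hdisj (Set.toFinite _) (Set.toFinite _)]
      exact add_le_add (ih (by omega)) hAr
  have final := main (t - 1) le_rfl
  have hsubU : (⋃ j ∈ Finset.range (t - 1), A j) ⊆ F0.edgeSet :=
    Set.iUnion₂_subset fun j _ => hAsub j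
  calc Nat.choose t 2 = ∑ j ∈ Finset.range (t - 1), (t - 1 - j) :=
        (sum_eq_choose (by omega)).symm
    _ ≤ (⋃ j ∈ Finset.range (t - 1), A j).ncard := final
    _ ≤ F0.edgeSet.ncard := Set.ncard_le_ncard hsubU (Set.toFinite _)



lemma mem_take_of_getElem {α : Type*} (l : List α) (i k : ℕ) (hk : k < l.length)
    (hki : k < i) : l[k] ∈ l.take i := by
  have h1 : (l.take i)[k]? = l[k]? := List.getElem?_take_of_lt hki
  have hk2 : k < (l.take i).length := by
    rw [List.length_take]; omega
  rw [List.getElem?_eq_getElem hk2, List.getElem?_eq_getElem hk] at h1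
  have h2 := Option.some.inj h1
  rw [← h2]
  exact List.getElem_mem _

lemma upper_bound (ht : 3 ≤ t) (G : SimpleGraph (Fin n))
    (F : SimpleGraph (Fin n)) (v : Fin n → Fin n)
    (hsat : IsSaturatingStructure G t n t F v)
    (hcore : ∀ i j : Fin n, (i : ℕ) < t → (j : ℕ) < t → i ≠ j → F.Adj (v i) (v j)) :
    ∃ F0, WeaklySaturated G F0 (star t) ∧ F0.edgeSet.ncard = Nat.choose t 2 := by
  classical
  obtain ⟨-, htn, hFG, hvinj, -, hdegF⟩ := hsat
  have hvbij : Function.Bijective v := Finite.injective_iff_bijective.mp hvinj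
  set σv : Fin n ≃ Fin n := Equiv.ofBijective v hvbij with hσv
  have hvs : ∀ a, v (σv.symm a) = a := fun a => σv.apply_symm_apply a
  have hsv : ∀ i, σv.symm (v i) = i := fun i => σv.symm_apply_apply i
  set F0 : SimpleGraph (Fin n) :=
    SimpleGraph.fromRel (fun a b => (σv.symm a : ℕ) < t ∧ (σv.symm b : ℕ) < t) with hF0
  have hF0adj : ∀ a b, F0.Adj a b ↔
      a ≠ b ∧ (σv.symm a : ℕ) < t ∧ (σv.symm b : ℕ) < t := by
    intro a b
    rw [hF0, SimpleGraph.fromRel_adj]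
    tauto
  have hF0G : F0 ≤ G := by
    intro a b hab
    rw [hF0adj] at hab
    obtain ⟨hne, h1, h2⟩ := hab
    have hne' : σv.symm a ≠ σv.symm b := fun hc => hne (by rw [← hvs a, ← hvs b, hc])
    have := hFG (hcore _ _ h1 h2 hne')
    rwa [hvs, hvs] at this
  -- the edge count
  have hcount : F0.edgeSet.ncard = Nat.choose t 2 := by
    set g : Fin t → Fin n := fun k => v (Fin.castLE htn.le k) with hg
    have hginj : Function.Injective g :=
      fun x y hxy => Fin.castLE_injective _ (hvinj hxy)
    have hset : F0.edgeSet = Sym2.map g '' (⊤ : SimpleGraph (Fin t)).edgeSet := by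
      ext e
      induction e using Sym2.ind with
      | _ a b =>
        simp only [SimpleGraph.mem_edgeSet, hF0adj, Set.mem_image]
        constructor
        · rintro ⟨hne, h1, h2⟩
          refine ⟨s(⟨(σv.symm a : ℕ), h1⟩, ⟨(σv.symm b : ℕ), h2⟩), ?_, ?_⟩
          · rw [SimpleGraph.mem_edgeSet, SimpleGraph.top_adj]
            intro hc
            apply hne
            have hval : (σv.symm a : ℕ) = (σv.symm b : ℕ) := Fin.mk.inj hc
            have : σv.symm a = σv.symm b := Fin.ext hval
            rw [← hvs a, ← hvs b, this]
          · rw [Sym2.map_pair_eq]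
            have hga : g ⟨(σv.symm a : ℕ), h1⟩ = a := by
              show v (Fin.castLE htn.le ⟨(σv.symm a : ℕ), h1⟩) = a
              have hcast : Fin.castLE htn.le ⟨(σv.symm a : ℕ), h1⟩ = σv.symm a := Fin.ext rfl
              rw [hcast, hvs]
            have hgb : g ⟨(σv.symm b : ℕ), h2⟩ = b := by
              show v (Fin.castLE htn.le ⟨(σv.symm b : ℕ), h2⟩) = b
              have hcast : Fin.castLE htn.le ⟨(σv.symm b : ℕ), h2⟩ = σv.symm b := Fin.ext rfl
              rw [hcast, hvs]
            rw [hga, hgb]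
        · rintro ⟨e', he', hm⟩
          obtain ⟨i, j, rfl⟩ : ∃ i j : Fin t, e' = s(i, j) :=
            Sym2.ind (fun i j => ⟨i, j, rfl⟩) e'
          rw [SimpleGraph.mem_edgeSet, SimpleGraph.top_adj] at he'
          rw [Sym2.map_pair_eq] at hm
          rcases Sym2.eq_iff.mp hm.symm with ⟨rfl, rfl⟩ | ⟨rfl, rfl⟩
          · refine ⟨fun hc => he' (hginj hc), ?_, ?_⟩
            · show ((σv.symm (v (Fin.castLE htn.le i)) : Fin n) : ℕ) < t
              rw [hsv]; exact i.isLt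
            · show ((σv.symm (v (Fin.castLE htn.le j)) : Fin n) : ℕ) < t
              rw [hsv]; exact j.isLt
          · refine ⟨fun hc => he' (hginj hc.symm), ?_, ?_⟩
            · show ((σv.symm (v (Fin.castLE htn.le j)) : Fin n) : ℕ) < t
              rw [hsv]; exact j.isLt
            · show ((σv.symm (v (Fin.castLE htn.le i)) : Fin n) : ℕ) < t
              rw [hsv]; exact i.isLt
    rw [hset, Set.ncard_image_of_injective _ (Sym2.map.injective hginj)]
    have h1 : (⊤ : SimpleGraph (Fin t)).edgeSet.ncard
        = (⊤ : SimpleGraph (Fin t)).edgeFinset.card := by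
      rw [← SimpleGraph.coe_edgeFinset, Set.ncard_coe_finset]
    rw [h1, SimpleGraph.card_edgeFinset_top_eq_card_choose_two, Fintype.card_fin]
  -- the key function
  set key : Sym2 (Fin n) → ℕ :=
    Sym2.lift ⟨fun a b => max (σv.symm a : ℕ) (σv.symm b : ℕ),
      fun a b => max_comm _ _⟩ with hkey
  have hkey_mk : ∀ a b, key s(a, b) = max (σv.symm a : ℕ) (σv.symm b : ℕ) :=
    fun a b => rfl
  have hkey_lt : ∀ e, key e < n := by
    intro e
    obtain ⟨a, b, rfl⟩ : ∃ a b : Fin n, e = s(a, b) := Sym2.ind (fun a b => ⟨a, b, rfl⟩) e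
    rw [hkey_mk]
    exact max_lt (σv.symm a).isLt (σv.symm b).isLt
  set D : Finset (Sym2 (Fin n)) := (G.edgeSet \ F0.edgeSet).toFinite.toFinset with hD
  set es : List (Sym2 (Fin n)) :=
    (List.range n).flatMap (fun i => (D.filter (fun e => key e = i)).toList) with hes
  have hmem_es : ∀ e, e ∈ es ↔ e ∈ G.edgeSet \ F0.edgeSet := by
    intro e
    rw [hes, List.mem_flatMap]
    constructor
    · rintro ⟨i, -, hi⟩
      rw [Finset.mem_toList, Finset.mem_filter] at hi
      exact (Set.Finite.mem_toFinset _).mp hi.1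
    · intro he
      refine ⟨key e, List.mem_range.mpr (hkey_lt e), ?_⟩
      rw [Finset.mem_toList, Finset.mem_filter]
      exact ⟨(Set.Finite.mem_toFinset _).mpr he, rfl⟩
  have hnodup : es.Nodup := by
    rw [hes, List.nodup_flatMap]
    constructor
    · exact fun i _ => Finset.nodup_toList _
    · refine (List.pairwise_lt_range (n := n)).imp ?_
      intro i j hij
      intro e hei hej
      rw [Finset.mem_toList, Finset.mem_filter] at hei hej
      omega
  have hsorted : ∀ p q : Fin es.length, p < q → key (es.get p) ≤ key (es.get q) := by
    have hp : es.Pairwise (fun e e' => key e ≤ key e') := by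
      rw [hes, List.pairwise_flatMap]
      constructor
      · intro i _
        refine List.pairwise_iff_forall_sublist.mpr ?_
        intro e e' hsub
        have he : e ∈ (D.filter (fun e => key e = i)).toList := hsub.subset (by simp)
        have he' : e' ∈ (D.filter (fun e => key e = i)).toList := hsub.subset (by simp)
        rw [Finset.mem_toList, Finset.mem_filter] at he he'
        omega
      · refine (List.pairwise_lt_range (n := n)).imp ?_
        intro i j hij e hei e' hej
        rw [Finset.mem_toList, Finset.mem_filter] at hei hej
        omega
    exact fun p q hpq => List.pairwise_iff_get.mp hp p q hpq
  refine ⟨F0, ⟨hF0G, es, hnodup, hmem_es, ?_⟩, hcount⟩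
  intro p
  set Gc := F0 ⊔ SimpleGraph.fromEdgeSet {e | e ∈ es.take ((p : ℕ) + 1)} with hGc
  have hF0Gc : F0 ≤ Gc := le_sup_left
  have hediff : es.get p ∈ G.edgeSet \ F0.edgeSet := (hmem_es _).mp (List.get_mem es p)
  have claim : ∀ c d : Fin n, es.get p = s(c, d) →
      (σv.symm c : ℕ) < (σv.symm d : ℕ) →
      ContainsCopyWithEdge Gc (star t) (es.get p) := by
    intro c d he hcd
    have hGadj : G.Adj c d := G.mem_edgeSet.mp (he ▸ hediff.1)
    have hnF0 : ¬ F0.Adj c d := fun hc => (he ▸ hediff.2) (F0.mem_edgeSet.mpr hc)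
    have hi_ge : t ≤ (σv.symm d : ℕ) := by
      by_contra hlt2
      push_neg at hlt2
      exact hnF0 ((hF0adj c d).mpr ⟨hGadj.ne, by omega, by omega⟩)
    have hkey_e : key (es.get p) = (σv.symm d : ℕ) := by
      rw [he, hkey_mk]; omega
    have hpre : ∀ x y : Fin n, G.Adj x y → key s(x, y) < (σv.symm d : ℕ) → Gc.Adj x y := by
      intro x y hxy hk
      by_cases hF0xy : F0.Adj x y
      · exact hF0Gc hF0xy
      · have hmem2 : s(x, y) ∈ es :=
          (hmem_es _).mpr ⟨G.mem_edgeSet.mpr hxy, fun hc => hF0xy (F0.mem_edgeSet.mp hc)⟩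
        obtain ⟨q, hq⟩ := List.get_of_mem hmem2
        have hqp : (q : ℕ) < (p : ℕ) := by
          by_contra hge
          push_neg at hge
          have hle2 : key (es.get p) ≤ key (es.get q) := by
            rcases eq_or_lt_of_le hge with heq | hlt3
            · have : p = q := Fin.ext heq
              rw [this]
            · exact hsorted p q hlt3
          rw [hq, hkey_e] at hle2
          omega
        rw [hGc, SimpleGraph.sup_adj]
        right
        rw [SimpleGraph.fromEdgeSet_adj]
        refine ⟨?_, hxy.ne⟩
        simp only [Set.mem_setOf_eq]
        have hmt := mem_take_of_getElem es ((p : ℕ) + 1) (q : ℕ) q.isLt (by omega)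
        rw [List.get_eq_getElem] at hq
        rw [← hq]
        exact hmt
    have hGc_cd : Gc.Adj c d := by
      rw [hGc, SimpleGraph.sup_adj]
      right
      rw [SimpleGraph.fromEdgeSet_adj]
      refine ⟨?_, hGadj.ne⟩
      simp only [Set.mem_setOf_eq]
      have hmt := mem_take_of_getElem es ((p : ℕ) + 1) (p : ℕ) p.isLt (by omega)
      have he' := he
      rw [List.get_eq_getElem] at he'
      rw [← he']
      exact hmt
    rw [he]
    by_cases hjt : (σv.symm c : ℕ) < t
    · -- center is a core vertex
      set emb : Fin (t - 1) → Fin n := fun r =>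
        if (r : ℕ) < (σv.symm c : ℕ) then ⟨(r : ℕ), by omega⟩ else ⟨(r : ℕ) + 1, by omega⟩
        with hemb
      have hembval : ∀ r, ((emb r : Fin n) : ℕ)
          = if (r : ℕ) < (σv.symm c : ℕ) then (r : ℕ) else (r : ℕ) + 1 := by
        intro r
        rw [hemb]
        by_cases h : (r : ℕ) < (σv.symm c : ℕ) <;> simp [h]
      have hembv : ∀ r, ((emb r : Fin n) : ℕ) < t ∧ ((emb r : Fin n) : ℕ) ≠ (σv.symm c : ℕ) := by
        intro r
        rw [hembval r]
        have hr := r.isLt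
        split <;> omega
      have hembinj : Function.Injective emb := by
        intro r r' hrr
        have h1 := congrArg Fin.val hrr
        rw [hembval r, hembval r'] at h1
        apply Fin.ext
        split at h1 <;> split at h1 <;> omega
      refine copy_of_inj (by omega) (fun r => v (emb r))
        (fun r r' hrr => hembinj (hvinj hrr)) ?_ ?_ hGc_cd
      · intro r
        apply hF0Gc
        rw [hF0adj]
        refine ⟨?_, ?_, ?_⟩
        · intro hc
          have : σv.symm c = emb r := by rw [hc, hsv]
          have := congrArg Fin.val this
          exact (hembv r).2 (by omega)
        · omega
        · rw [hsv]; exact (hembv r).1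
      · intro r hc
        have : emb r = σv.symm d := by rw [← hc, hsv]
        have := congrArg Fin.val this
        have h1 := (hembv r).1
        omega
    · -- center is a later vertex: use its t-1 earlier F-neighbors
      push_neg at hjt
      have hdeg2 := hdegF (σv.symm c) hjt
      obtain ⟨g'', hg''inj, hg''mem⟩ := exists_inj_to_set (le_of_eq hdeg2.symm)
      have hg''lt : ∀ r, ((g'' r : Fin n) : ℕ) < (σv.symm c : ℕ) := fun r => (hg''mem r).1
      have hg''adj : ∀ r, G.Adj c (v (g'' r)) := by
        intro r
        have := hFG (hg''mem r).2
        rwa [hvs] at this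
      refine copy_of_inj (by omega) (fun r => v (g'' r))
        (fun r r' hrr => hg''inj (hvinj hrr)) ?_ ?_ hGc_cd
      · intro r
        apply hpre _ _ (hg''adj r)
        rw [hkey_mk, hsv]
        have := hg''lt r
        omega
      · intro r hc
        have : g'' r = σv.symm d := by rw [← hc, hsv]
        have := congrArg Fin.val this
        have h1 := hg''lt r
        omega
  obtain ⟨a, b, he⟩ : ∃ a b, es.get p = s(a, b) :=
    Sym2.ind (fun a b => ⟨a, b, rfl⟩) (es.get p)
  have hGadj : G.Adj a b := G.mem_edgeSet.mp (he ▸ hediff.1)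
  have hne : σv.symm a ≠ σv.symm b := fun hc => hGadj.ne (by rw [← hvs a, ← hvs b, hc])
  rcases lt_or_gt_of_ne hne with hlt | hgt
  · exact claim a b he hlt
  · exact claim b a (he.trans (Sym2.eq_swap)) hgt



lemma min_degree (ht : 3 ≤ t) {G F : SimpleGraph (Fin n)} {v : Fin n → Fin n}
    (hsat : IsSaturatingStructure G t n t F v)
    (hcore : ∀ i j : Fin n, (i : ℕ) < t → (j : ℕ) < t → i ≠ j → F.Adj (v i) (v j)) :
    ∀ a : Fin n, t - 1 ≤ (G.neighborSet a).ncard := by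
  classical
  obtain ⟨-, htn, hFG, hvinj, -, hdegF⟩ := hsat
  have hvbij : Function.Bijective v := Finite.injective_iff_bijective.mp hvinj
  set σv : Fin n ≃ Fin n := Equiv.ofBijective v hvbij with hσv
  have hvs : ∀ a, v (σv.symm a) = a := fun a => σv.apply_symm_apply a
  have hsv : ∀ i, σv.symm (v i) = i := fun i => σv.symm_apply_apply i
  intro a
  by_cases hjt : (σv.symm a : ℕ) < t
  · set emb : Fin (t - 1) → Fin n := fun r =>
      if (r : ℕ) < (σv.symm a : ℕ) then ⟨(r : ℕ), by omega⟩ else ⟨(r : ℕ) + 1, by omega⟩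
      with hemb
    have hembval : ∀ r, ((emb r : Fin n) : ℕ)
        = if (r : ℕ) < (σv.symm a : ℕ) then (r : ℕ) else (r : ℕ) + 1 := by
      intro r
      rw [hemb]
      by_cases h : (r : ℕ) < (σv.symm a : ℕ) <;> simp [h]
    have hembv : ∀ r, ((emb r : Fin n) : ℕ) < t ∧ ((emb r : Fin n) : ℕ) ≠ (σv.symm a : ℕ) := by
      intro r
      rw [hembval r]
      have hr := r.isLt
      split <;> omega
    have hembinj : Function.Injective emb := by
      intro r r' hrr
      have h1 := congrArg Fin.val hrr
      rw [hembval r, hembval r'] at h1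
      apply Fin.ext
      split at h1 <;> split at h1 <;> omega
    refine le_ncard_of_inj (fun r => v (emb r)) (fun r r' hrr => hembinj (hvinj hrr)) ?_
    intro r
    rw [SimpleGraph.mem_neighborSet]
    have hne : σv.symm a ≠ emb r := by
      intro hc
      exact (hembv r).2 (congrArg Fin.val hc).symm
    have := hFG (hcore (σv.symm a) (emb r) hjt (hembv r).1 hne)
    rwa [hvs] at this
  · push_neg at hjt
    have hdeg2 := hdegF (σv.symm a) hjt
    obtain ⟨g'', hg''inj, hg''mem⟩ := exists_inj_to_set (le_of_eq hdeg2.symm)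
    refine le_ncard_of_inj (fun r => v (g'' r)) (fun r r' hrr => hg''inj (hvinj hrr)) ?_
    intro r
    rw [SimpleGraph.mem_neighborSet]
    have := hFG (hg''mem r).2
    rwa [hvs] at this

/-- if a connected graph `G` on `n` vertices contains a saturating structure of
length `n` whose core is isomorphic to `K_t`, then `wsat(G, K_{1,t}) = C(t,2)`. -/
theorem stmt_13 (t n : ℕ) (ht : 3 ≤ t) (G : SimpleGraph (Fin n)) (hG : G.Connected)
    (h : ∃ (F : SimpleGraph (Fin n)) (v : Fin n → Fin n),
      IsSaturatingStructure G t n t F v ∧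
      ∀ i j : Fin n, (i : ℕ) < t → (j : ℕ) < t → i ≠ j → F.Adj (v i) (v j)) :
    wsat G (star t) = Nat.choose t 2 := by
  classical
  obtain ⟨F, v, hsat, hcore⟩ := h
  have htn : t < n := hsat.2.1
  have hdeg : ∀ a : Fin n, t - 1 ≤ (G.neighborSet a).ncard := min_degree ht hsat hcore
  obtain ⟨F0, hws, hcount⟩ := upper_bound ht G F v hsat hcore
  have hmemS : Nat.choose t 2 ∈ {m | ∃ F', WeaklySaturated G F' (star t)
      ∧ F'.edgeSet.ncard = m} := ⟨F0, hws, hcount⟩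
  refine le_antisymm (Nat.sInf_le hmemS) ?_
  refine le_csInf ⟨_, hmemS⟩ ?_
  rintro m ⟨F', hws', rfl⟩
  exact lower_bound ht htn.le G F' hdeg hws'
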